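/- Let x_1,…,x_d be independent exponential random variables with rates λ_1,…,λ_d > 0 (so E[x_j] = 1/λ_j), and define the game val(u) = E[max_{j∈u} x_j] for nonempty u ⊆ {1,…,d}, with val(∅) = 0. Then the Shapley value of player j equals φ_j = Σ_{r=1}^{d} ((−1)^{r−1}/r) Σ_{w ⊆ {1,…,d}, j ∈ w, |w| = r} 1/(Σ_{ℓ∈w} λ_ℓ). -/

import Mathlib

open Finset MeasureTheory ProbabilityTheory

/-- The Shapley value of player `j` for the cooperative game `val` on subsets of `Fin d`. -/
noncomputable def shapley {d : ℕ} (val : Finset (Fin d) → ℝ) (j : Fin d) : ℝ :=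
  (d : ℝ)⁻¹ * ∑ u ∈ (Finset.univ.erase j).powerset,
    ((Nat.choose (d - 1) u.card : ℝ))⁻¹ * (val (insert j u) - val u)

/-- The value of a coalition `u` of random lifetimes: `E[max_{j ∈ u} x_j]`, with the
empty coalition worth `0`. -/
noncomputable def maxVal {Ω : Type*} [MeasurableSpace Ω] (μ : Measure Ω) {d : ℕ}
    (x : Fin d → Ω → ℝ) (u : Finset (Fin d)) : ℝ :=
  if h : u.Nonempty then ∫ ω, u.sup' h (fun j => x j ω) ∂μ else 0


noncomputable def mFun {ι : Type*} (f : ι → ℝ) (w : Finset ι) : ℝ :=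
  if hw : w.Nonempty then w.inf' hw f else 0

lemma inf'_const_inf {ι : Type*} (s : Finset ι) (h : s.Nonempty) (f : ι → ℝ) (c : ℝ) :
    (s.inf' h (fun i => c ⊓ f i)) = c ⊓ s.inf' h f := by
  induction h using Finset.Nonempty.cons_induction with
  | singleton a => rfl
  | cons a s ha hs ih =>
      rw [Finset.inf'_cons (H := hs), Finset.inf'_cons (H := hs), ih]
      simp only [← inf_assoc]
      rw [inf_right_comm c (f a) c, inf_idem]

lemma mFun_insert {ι : Type*} [DecidableEq ι] (f : ι → ℝ) (a : ι) (w : Finset ι)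
    (hw : w.Nonempty) : mFun f (insert a w) = f a ⊓ mFun f w := by
  simp only [mFun, dif_pos hw, dif_pos (Finset.insert_nonempty a w)]
  exact Finset.inf'_insert (H := hw) (f := f)

lemma sup'_eq_sum_mFun {ι : Type*} [DecidableEq ι] (s : Finset ι) (h : s.Nonempty) (f : ι → ℝ) :
    s.sup' h f = ∑ w ∈ s.powerset, (-1 : ℝ) ^ (w.card + 1) * mFun f w := by
  induction h using Finset.Nonempty.cons_induction generalizing f with
  | singleton a =>
      conv_rhs => rw [show ({a} : Finset ι) = insert a ∅ by simp,
        Finset.sum_powerset_insert (Finset.notMem_empty a)]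
      simp [mFun]
  | cons a s ha hs ih =>
      have hcons : (Finset.cons a s ha).powerset = (insert a s).powerset := by
        rw [Finset.cons_eq_insert]
      rw [Finset.sup'_cons (H := hs), hcons,
        Finset.sum_powerset_insert ha, ← ih f]
      have key : ∑ w ∈ s.powerset, (-1 : ℝ) ^ ((insert a w).card + 1) * mFun f (insert a w)
          = f a - (f a ⊓ s.sup' hs f) := by
        have h1 : ∀ w ∈ s.powerset, (-1 : ℝ) ^ ((insert a w).card + 1) * mFun f (insert a w)
            = -((-1 : ℝ) ^ (w.card + 1) * mFun (fun i => f a ⊓ f i) w)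
              + (if w = ∅ then f a else 0) := by
          intro w hw
          rcases w.eq_empty_or_nonempty with rfl | hwne
          · simp [mFun]
          · have haw : a ∉ w := fun hc => ha (Finset.mem_powerset.mp hw hc)
            rw [Finset.card_insert_of_notMem haw, mFun_insert f a w hwne,
              if_neg hwne.ne_empty]
            have h2 : mFun (fun i => f a ⊓ f i) w = f a ⊓ mFun f w := by
              simp only [mFun, dif_pos hwne]; exact inf'_const_inf w hwne f (f a)
            rw [h2]; ring
        rw [Finset.sum_congr rfl h1, Finset.sum_add_distrib, Finset.sum_neg_distrib,
          ← ih (fun i => f a ⊓ f i), Finset.sup'_inf_distrib_left,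
          Finset.sum_ite_eq' s.powerset (∅ : Finset ι) (fun _ => f a),
          if_pos (Finset.empty_mem_powerset s)]
        ring
      rw [key]
      rcases le_total (f a) (s.sup' hs f) with hle | hle
      · rw [max_eq_right hle, min_eq_left hle]; ring
      · rw [max_eq_left hle, min_eq_right hle]; ring


lemma expMeasure_Iio_zero (r : ℝ) : expMeasure r (Set.Iio 0) = 0 := by
  rw [expMeasure, gammaMeasure, withDensity_apply _ measurableSet_Iio]
  exact lintegral_gammaPDF_of_nonpos le_rfl

lemma expMeasure_Ioi {r : ℝ} (hr : 0 < r) {t : ℝ} (ht : 0 ≤ t) :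
    expMeasure r (Set.Ioi t) = ENNReal.ofReal (Real.exp (-(r * t))) := by
  have : IsProbabilityMeasure (expMeasure r) := isProbabilityMeasure_expMeasure hr
  have hIic : expMeasure r (Set.Iic t) = ENNReal.ofReal (1 - Real.exp (-(r * t))) := by
    have h1 := cdf_expMeasure_eq hr t
    rw [cdf_eq_real, measureReal_def, if_pos ht] at h1
    rw [← ENNReal.ofReal_toReal (measure_ne_top (expMeasure r) (Set.Iic t)), h1]
  have hc : Set.Ioi t = (Set.Iic t)ᶜ := Set.compl_Iic.symm
  have hle1 : Real.exp (-(r * t)) ≤ 1 := by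
    rw [show (1:ℝ) = Real.exp 0 by simp]
    exact Real.exp_le_exp.mpr (by nlinarith)
  rw [hc, measure_compl measurableSet_Iic (measure_ne_top _ _), measure_univ, hIic,
    ← ENNReal.ofReal_one, ← ENNReal.ofReal_sub _ (by linarith)]
  norm_num

lemma measurable_finset_inf' {Ω ι : Type*} [MeasurableSpace Ω] (s : Finset ι) (h : s.Nonempty)
    (x : ι → Ω → ℝ) (hx : ∀ i, Measurable (x i)) :
    Measurable (fun ω => s.inf' h fun i => x i ω) := by
  induction h using Finset.Nonempty.cons_induction with
  | singleton a => simpa using hx a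
  | cons a s ha hs ih => simp only [Finset.inf'_cons (H := hs)]; exact (hx a).inf ih

theorem integral_inf'_exp
    {Ω : Type*} [MeasurableSpace Ω] (μ : Measure Ω) [IsProbabilityMeasure μ]
    (d : ℕ) (x : Fin d → Ω → ℝ) (hx : ∀ j, Measurable (x j))
    (lam : Fin d → ℝ) (hlam : ∀ j, 0 < lam j)
    (hind : iIndepFun x μ)
    (hlaw : ∀ j, μ.map (x j) = expMeasure (lam j))
    (w : Finset (Fin d)) (hw : w.Nonempty) :
    Integrable (fun ω => w.inf' hw fun ℓ => x ℓ ω) μ ∧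
      ∫ ω, w.inf' hw (fun ℓ => x ℓ ω) ∂μ = (∑ ℓ ∈ w, lam ℓ)⁻¹ := by
  set g : Ω → ℝ := fun ω => w.inf' hw fun ℓ => x ℓ ω with hg
  set s : ℝ := ∑ ℓ ∈ w, lam ℓ with hs
  have hspos : 0 < s := Finset.sum_pos (fun ℓ _ => hlam ℓ) hw
  have gmeas : Measurable g := measurable_finset_inf' w hw x hx
  -- a.e. nonneg
  have hnn : ∀ ℓ : Fin d, ∀ᵐ ω ∂μ, 0 ≤ x ℓ ω := by
    intro ℓ
    have : μ {ω | ¬ 0 ≤ x ℓ ω} = 0 := by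
      have hpre : {ω | ¬ 0 ≤ x ℓ ω} = x ℓ ⁻¹' (Set.Iio 0) := by
        ext ω; simp [not_le]
      rw [hpre, ← Measure.map_apply (hx ℓ) measurableSet_Iio, hlaw ℓ, expMeasure_Iio_zero]
    exact this
  have hgnn : 0 ≤ᵐ[μ] g := by
    have hall : ∀ᵐ ω ∂μ, ∀ ℓ ∈ w, 0 ≤ x ℓ ω := by
      rw [Finset.eventually_all]
      exact fun ℓ _ => hnn ℓ
    filter_upwards [hall] with ω hω
    exact Finset.le_inf' hw _ hω
  -- survival function
  have hsurv : ∀ t : ℝ, 0 ≤ t → μ {ω | t < g ω} = ENNReal.ofReal (Real.exp (-(s * t))) := by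
    intro t ht
    have hset : {ω | t < g ω} = ⋂ ℓ ∈ w, x ℓ ⁻¹' (Set.Ioi t) := by
      ext ω
      simp [hg, Finset.lt_inf'_iff]
    rw [hset, hind.meas_biInter (fun ℓ _ => ⟨Set.Ioi t, measurableSet_Ioi, rfl⟩)]
    have hone : ∀ ℓ ∈ w, μ (x ℓ ⁻¹' Set.Ioi t) = ENNReal.ofReal (Real.exp (-(lam ℓ * t))) := by
      intro ℓ _
      rw [← Measure.map_apply (hx ℓ) measurableSet_Ioi, hlaw ℓ, expMeasure_Ioi (hlam ℓ) ht]
    rw [Finset.prod_congr rfl hone, ← ENNReal.ofReal_prod_of_nonneg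
      (fun ℓ _ => (Real.exp_pos _).le), ← Real.exp_sum]
    congr 2
    rw [hs, Finset.sum_mul]
    simp [Finset.sum_neg_distrib]
  -- the lintegral
  have hkey : ∫⁻ ω, ENNReal.ofReal (g ω) ∂μ = ENNReal.ofReal s⁻¹ := by
    rw [lintegral_eq_lintegral_meas_lt μ hgnn gmeas.aemeasurable]
    have h1 : ∫⁻ t in Set.Ioi (0:ℝ), μ {a | t < g a}
        = ∫⁻ t in Set.Ioi (0:ℝ), ENNReal.ofReal (Real.exp (-(s * t))) := by
      apply setLIntegral_congr_fun_ae measurableSet_Ioi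
      exact ae_of_all _ fun t ht => hsurv t (le_of_lt ht)
    rw [h1, ← ofReal_integral_eq_lintegral_ofReal]
    · congr 1
      have := integral_comp_mul_left_Ioi (fun u => Real.exp (-u)) 0 hspos
      simp only [mul_zero] at this
      calc ∫ t in Set.Ioi (0:ℝ), Real.exp (-(s*t))
          = ∫ t in Set.Ioi (0:ℝ), Real.exp (-(s*t)) := rfl
        _ = s⁻¹ • ∫ u in Set.Ioi (0:ℝ), Real.exp (-u) := this
        _ = s⁻¹ := by rw [integral_exp_neg_Ioi]; simp
    · have := exp_neg_integrableOn_Ioi 0 hspos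
      apply this.congr_fun ?_ measurableSet_Ioi
      intro t _; ring_nf
    · exact ae_of_all _ fun t => (Real.exp_pos _).le
  have hfin : HasFiniteIntegral g μ := by
    rw [hasFiniteIntegral_iff_norm]
    have : ∫⁻ a, ENNReal.ofReal ‖g a‖ ∂μ = ∫⁻ a, ENNReal.ofReal (g a) ∂μ := by
      apply lintegral_congr_ae
      filter_upwards [hgnn] with ω hω
      rw [Real.norm_eq_abs, abs_of_nonneg hω]
    rw [this, hkey]
    exact ENNReal.ofReal_lt_top
  have hint : Integrable g μ := ⟨gmeas.aestronglyMeasurable, hfin⟩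
  refine ⟨hint, ?_⟩
  rw [integral_eq_lintegral_of_nonneg_ae hgnn gmeas.aestronglyMeasurable, hkey,
    ENNReal.toReal_ofReal (by positivity)]



lemma choose_inv_sum {n m : ℕ} (hmn : m ≤ n) :
    ∑ i ∈ Finset.range (n - m + 1), ((n - m).choose i : ℝ) * ((n.choose (m + i) : ℝ))⁻¹
      = (n + 1) / (m + 1) := by
  have hterm : ∀ i ∈ Finset.range (n - m + 1),
      ((n - m).choose i : ℝ) * ((n.choose (m + i) : ℝ))⁻¹
        = ((m + i).choose m : ℝ) * ((n.choose m : ℝ))⁻¹ := by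
    intro i hi
    rw [Finset.mem_range] at hi
    have hmi : m + i ≤ n := by omega
    have h := Nat.choose_mul (n := n) (Nat.le_add_right m i)
    have h2 : (m + i) - m = i := by omega
    rw [h2] at h
    have ha : (0:ℝ) < n.choose (m+i) := by exact_mod_cast Nat.choose_pos hmi
    have hc : (0:ℝ) < n.choose m := by exact_mod_cast Nat.choose_pos hmn
    have hcast := congrArg (Nat.cast (R := ℝ)) h
    push_cast at hcast
    field_simp
    nlinarith [hcast]
  rw [Finset.sum_congr rfl hterm, ← Finset.sum_mul]
  have hsum : ∑ i ∈ Finset.range (n - m + 1), ((m + i).choose m : ℝ)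
      = ((n+1).choose (m+1) : ℝ) := by
    norm_cast
    rw [← Nat.sum_Icc_choose n m,
      show Finset.Icc m n = Finset.Ico m (n+1) by rw [Finset.Ico_add_one_right_eq_Icc],
      Finset.sum_Ico_eq_sum_range, show n + 1 - m = n - m + 1 by omega]
  rw [hsum]
  have hc : (0:ℝ) < n.choose m := by exact_mod_cast Nat.choose_pos hmn
  have hkey := congrArg (Nat.cast (R := ℝ)) (Nat.add_one_mul_choose_eq n m)
  push_cast at hkey
  field_simp
  nlinarith [hkey]

lemma shapley_sum_subsets {d : ℕ} (c : Finset (Fin d) → ℝ) (j : Fin d) :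
    shapley (fun u => ∑ w ∈ u.powerset, c w) j
      = ∑ v ∈ (Finset.univ.erase j).powerset, c (insert j v) / (v.card + 1) := by
  classical
  have hd : 0 < d := Fin.pos j
  set E := (Finset.univ : Finset (Fin d)).erase j with hE
  have hcardE : E.card = d - 1 := by
    rw [hE, Finset.card_erase_of_mem (Finset.mem_univ j), Finset.card_univ, Fintype.card_fin]
  have hmarg : ∀ u ∈ E.powerset,
      ((Nat.choose (d-1) u.card : ℝ))⁻¹ *
        ((∑ w ∈ (insert j u).powerset, c w) - ∑ w ∈ u.powerset, c w)
        = ∑ w ∈ u.powerset, ((Nat.choose (d-1) u.card : ℝ))⁻¹ * c (insert j w) := by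
    intro u hu
    have hj : j ∉ u := fun hc => (Finset.mem_erase.mp (Finset.mem_powerset.mp hu hc)).1 rfl
    rw [Finset.sum_powerset_insert hj, ← Finset.mul_sum]
    ring
  unfold shapley
  rw [Finset.sum_congr rfl hmarg]
  -- extend inner sums to indicators over E.powerset
  have hfilter : ∀ u ∈ E.powerset, u.powerset = E.powerset.filter (fun w => w ⊆ u) := by
    intro u hu
    rw [Finset.mem_powerset] at hu
    ext w
    simp only [Finset.mem_powerset, Finset.mem_filter]
    exact ⟨fun h => ⟨h.trans hu, h⟩, fun h => h.2⟩
  rw [Finset.sum_congr rfl (fun u hu => by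
    rw [hfilter u hu, Finset.sum_filter])]
  rw [Finset.sum_comm]
  -- now inner sum over u
  have hinner : ∀ w ∈ E.powerset,
      (∑ u ∈ E.powerset, if w ⊆ u then ((Nat.choose (d-1) u.card : ℝ))⁻¹ * c (insert j w) else 0)
        = c (insert j w) * (d / (w.card + 1)) := by
    intro w hw
    rw [Finset.mem_powerset] at hw
    have hm : w.card ≤ d - 1 := hcardE ▸ Finset.card_le_card hw
    rw [← Finset.sum_filter]
    have step1 : ∑ u ∈ E.powerset.filter (fun u => w ⊆ u),
        ((Nat.choose (d-1) u.card : ℝ))⁻¹ * c (insert j w)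
        = ∑ v ∈ (E \ w).powerset, ((Nat.choose (d-1) (w.card + v.card) : ℝ))⁻¹ * c (insert j w) := by
      apply Finset.sum_nbij' (i := fun u => u \ w) (j := fun v => w ∪ v)
      · intro u hu
        rw [Finset.mem_filter, Finset.mem_powerset] at hu
        rw [Finset.mem_powerset]
        exact Finset.sdiff_subset_sdiff hu.1 le_rfl
      · intro v hv
        rw [Finset.mem_powerset] at hv
        rw [Finset.mem_filter, Finset.mem_powerset]
        refine ⟨Finset.union_subset hw (hv.trans Finset.sdiff_subset), Finset.subset_union_left⟩
      · intro u hu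
        rw [Finset.mem_filter] at hu
        exact Finset.union_sdiff_of_subset hu.2
      · intro v hv
        rw [Finset.mem_powerset] at hv
        apply Finset.union_sdiff_cancel_left
        exact Finset.disjoint_of_subset_right hv Finset.sdiff_disjoint.symm
      · intro u hu
        rw [Finset.mem_filter, Finset.mem_powerset] at hu
        have hc2 : u.card = w.card + (u \ w).card := by
          have := Finset.card_sdiff_add_card_eq_card hu.2
          omega
        rw [hc2]
    rw [step1, ← Finset.sum_mul]
    have hcard : (E \ w).card = (d - 1) - w.card := by
      rw [Finset.card_sdiff_of_subset hw, hcardE]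
    rw [Finset.sum_powerset_apply_card (fun k => ((Nat.choose (d-1) (w.card + k) : ℝ))⁻¹), hcard]
    have := choose_inv_sum (n := d - 1) (m := w.card) hm
    simp only [nsmul_eq_mul] at *
    rw [this]
    rw [show ((d-1 : ℕ) : ℝ) + 1 = (d : ℝ) by
      have : (1:ℕ) ≤ d := hd
      push_cast [Nat.cast_sub this]
      ring]
    ring
  rw [Finset.sum_congr rfl hinner, Finset.mul_sum]
  apply Finset.sum_congr rfl
  intro w hw
  have hdne : (d:ℝ) ≠ 0 := by positivity
  field_simp


lemma maxVal_eq
    {Ω : Type*} [MeasurableSpace Ω] (μ : Measure Ω) [IsProbabilityMeasure μ]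
    (d : ℕ) (x : Fin d → Ω → ℝ) (hx : ∀ j, Measurable (x j))
    (lam : Fin d → ℝ) (hlam : ∀ j, 0 < lam j)
    (hind : iIndepFun x μ)
    (hlaw : ∀ j, μ.map (x j) = expMeasure (lam j)) (u : Finset (Fin d)) :
    maxVal μ x u = ∑ w ∈ u.powerset, (-1:ℝ)^(w.card+1) * (∑ ℓ ∈ w, lam ℓ)⁻¹ := by
  classical
  rcases u.eq_empty_or_nonempty with rfl | hu
  · simp [maxVal]
  · rw [maxVal, dif_pos hu]
    have hpt : ∀ ω, u.sup' hu (fun k => x k ω)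
        = ∑ w ∈ u.powerset, (-1:ℝ)^(w.card+1) * mFun (fun k => x k ω) w :=
      fun ω => sup'_eq_sum_mFun u hu _
    rw [integral_congr_ae (ae_of_all μ hpt), integral_finset_sum]
    · apply Finset.sum_congr rfl
      intro w _
      rcases w.eq_empty_or_nonempty with rfl | hwne
      · simp [mFun]
      · have heq : (fun ω => mFun (fun k => x k ω) w)
            = fun ω => w.inf' hwne fun ℓ => x ℓ ω := by
          funext ω; simp only [mFun, dif_pos hwne]
        rw [integral_const_mul]
        congr 1
        rw [show (fun ω => mFun (fun k => x k ω) w) = _ from heq] at *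
        exact (integral_inf'_exp μ d x hx lam hlam hind hlaw w hwne).2
    · intro w _
      rcases w.eq_empty_or_nonempty with rfl | hwne
      · simpa [mFun] using (integrable_const (0:ℝ)).const_mul ((-1:ℝ)^(0+1))
      · have heq : (fun ω => mFun (fun k => x k ω) w)
            = fun ω => w.inf' hwne fun ℓ => x ℓ ω := by
          funext ω; simp only [mFun, dif_pos hwne]
        have := (integral_inf'_exp μ d x hx lam hlam hind hlaw w hwne).1
        rw [← heq] at this
        exact this.const_mul _

theorem shapley_max_exponential
    {Ω : Type*} [MeasurableSpace Ω] (μ : Measure Ω) [IsProbabilityMeasure μ]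
    (d : ℕ) (x : Fin d → Ω → ℝ) (hx : ∀ j, Measurable (x j))
    (lam : Fin d → ℝ) (hlam : ∀ j, 0 < lam j)
    (hind : iIndepFun x μ)
    (hlaw : ∀ j, μ.map (x j) = expMeasure (lam j)) (j : Fin d) :
    shapley (maxVal μ x) j
      = ∑ r ∈ Finset.Icc 1 d, ((-1 : ℝ) ^ (r - 1) / r)
          * ∑ w ∈ Finset.univ.powerset.filter (fun w => j ∈ w ∧ w.card = r),
              (∑ ℓ ∈ w, lam ℓ)⁻¹ := by
  classical
  set c : Finset (Fin d) → ℝ := fun w => (-1:ℝ)^(w.card+1) * (∑ ℓ ∈ w, lam ℓ)⁻¹ with hc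
  have hval : maxVal μ x = fun u => ∑ w ∈ u.powerset, c w :=
    funext (maxVal_eq μ d x hx lam hlam hind hlaw)
  rw [hval, shapley_sum_subsets c j]
  -- RHS as a single sum
  set A : Finset (Finset (Fin d)) :=
    Finset.univ.powerset.filter (fun w => j ∈ w) with hA
  have hfib : ∀ r : ℕ,
      Finset.univ.powerset.filter (fun w => j ∈ w ∧ w.card = r)
        = A.filter (fun w => w.card = r) := by
    intro r
    rw [hA, Finset.filter_filter]
  have hrhs : ∑ r ∈ Finset.Icc 1 d, ((-1 : ℝ) ^ (r - 1) / r)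
          * ∑ w ∈ Finset.univ.powerset.filter (fun w => j ∈ w ∧ w.card = r),
              (∑ ℓ ∈ w, lam ℓ)⁻¹
      = ∑ w ∈ A, (-1:ℝ)^(w.card - 1) / w.card * (∑ ℓ ∈ w, lam ℓ)⁻¹ := by
    have hmaps : ∀ w ∈ A, w.card ∈ Finset.Icc 1 d := by
      intro w hw
      rw [hA, Finset.mem_filter, Finset.mem_powerset] at hw
      rw [Finset.mem_Icc]
      constructor
      · exact Finset.card_pos.mpr ⟨j, hw.2⟩
      · simpa using Finset.card_le_card hw.1
    rw [← Finset.sum_fiberwise_of_maps_to hmaps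
      (fun w => (-1:ℝ)^(w.card - 1) / w.card * (∑ ℓ ∈ w, lam ℓ)⁻¹)]
    apply Finset.sum_congr rfl
    intro r _
    rw [hfib r, Finset.mul_sum]
    apply Finset.sum_congr rfl
    intro w hw
    rw [Finset.mem_filter] at hw
    rw [hw.2]
  rw [hrhs]
  apply Finset.sum_nbij' (i := fun v => insert j v) (j := fun w => w.erase j)
  · intro v hv
    rw [Finset.mem_powerset] at hv
    rw [hA, Finset.mem_filter, Finset.mem_powerset]
    exact ⟨Finset.subset_univ _, Finset.mem_insert_self j v⟩
  · intro w hw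
    rw [hA, Finset.mem_filter] at hw
    rw [Finset.mem_powerset]
    exact Finset.erase_subset_erase j (Finset.subset_univ w)
  · intro v hv
    rw [Finset.mem_powerset] at hv
    have hj : j ∉ v := fun hjv => (Finset.mem_erase.mp (hv hjv)).1 rfl
    exact Finset.erase_insert hj
  · intro w hw
    rw [hA, Finset.mem_filter] at hw
    exact Finset.insert_erase hw.2
  · intro v hv
    rw [Finset.mem_powerset] at hv
    have hj : j ∉ v := fun hjv => (Finset.mem_erase.mp (hv hjv)).1 rfl
    rw [hc]
    simp only [Finset.card_insert_of_notMem hj, Nat.add_sub_cancel]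
    rw [show v.card + 1 + 1 = v.card + 2 by ring, pow_add]
    push_cast
    ring
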